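/- Let C ⊆ L⁰₊ be convex, let g ∈ C be a numéraire of C, and let Q be an equivalent probability witnessing this, i.e., E_Q[(f/g)·1_{g>0}] ≤ Q[g>0] for all f ∈ C. Then the set K := { h ∈ L⁰₊ : P[h>0, g=0]=0 and E_Q[(h/g)·1_{g>0}] ≤ Q[g>0] } contains C, is convex and closed in probability, satisfies property (CS3) with respect to g, and is bounded in probability; consequently cs_g(C) ⊆ K and cs_g(C) is bounded. -/

import Mathlib

open MeasureTheory Filter Set

noncomputable section

variable {Ω : Type*} [MeasurableSpace Ω]

/-- The nonnegative orthant `L⁰₊` of `L⁰`: (a.e. classes of) random variables that are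
a.e. nonnegative.  We work with representatives, requiring a.e.-measurability. -/
def L0plus (P : Measure Ω) : Set (Ω → ℝ) :=
  {f | AEMeasurable f P ∧ 0 ≤ᵐ[P] f}

/-- A set `A ⊆ L⁰₊` is bounded (in probability) if `lim_{ℓ→∞} sup_{f∈A} P[f>ℓ] = 0`. -/
def BoundedInProb (P : Measure Ω) (A : Set (Ω → ℝ)) : Prop :=
  Tendsto (fun ℓ : ℝ => ⨆ f ∈ A, P {ω | ℓ < f ω}) atTop (nhds 0)

/-- A set `K` is closed in probability: it contains every (a.e.-measurable) limit in
measure of sequences from `K`.  (Convergence in probability is metrizable, so sequential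
closedness is closedness.) -/
def ClosedInProb (P : Measure Ω) (K : Set (Ω → ℝ)) : Prop :=
  ∀ (f : ℕ → Ω → ℝ) (g : Ω → ℝ), (∀ n, f n ∈ K) → AEMeasurable g P →
    TendstoInMeasure P f atTop g → g ∈ K

/-- `g` is strictly positive on `C`: `P[f > 0, g = 0] = 0` for every `f ∈ C`. -/
def StrictlyPositiveOn (P : Measure Ω) (C : Set (Ω → ℝ)) (g : Ω → ℝ) : Prop :=
  ∀ f ∈ C, P ({ω | 0 < f ω} ∩ {ω | g ω = 0}) = 0

/-- `Q` is a probability measure equivalent to `P`. -/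
def EquivProb (P Q : Measure Ω) : Prop :=
  IsProbabilityMeasure Q ∧ Q ≪ P ∧ P ≪ Q

/-- `g` is a numéraire of `C`: it is strictly positive on `C` and there is an equivalent
probability `Q` with `E_Q[(f/g)·1_{g>0}] ≤ Q[g>0]` for all `f ∈ C`. -/
def IsNumeraire (P : Measure Ω) (C : Set (Ω → ℝ)) (g : Ω → ℝ) : Prop :=
  StrictlyPositiveOn P C g ∧
    ∃ Q : Measure Ω, EquivProb P Q ∧
      ∀ f ∈ C, (∫⁻ ω in {ω | 0 < g ω}, ENNReal.ofReal (f ω / g ω) ∂Q) ≤ Q {ω | 0 < g ω}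

/-- The class `CS_g(C)` of subsets `K` of `L⁰₊` with (CS1) `C ⊆ K`, (CS2) `K` convex and
closed in probability, (CS3) `f ∈ K`, `δ ≥ 0`, `(1+δ)f − δg ∈ L⁰₊` imply `(1+δ)f − δg ∈ K`. -/
def CSclass (P : Measure Ω) (C : Set (Ω → ℝ)) (g : Ω → ℝ) : Set (Set (Ω → ℝ)) :=
  {K | K ⊆ L0plus P ∧ C ⊆ K ∧ Convex ℝ K ∧ ClosedInProb P K ∧
    ∀ f ∈ K, ∀ δ : ℝ, 0 ≤ δ →
      (fun ω => (1 + δ) * f ω - δ * g ω) ∈ L0plus P →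
      (fun ω => (1 + δ) * f ω - δ * g ω) ∈ K}

/-- `cs_g(C)`, the smallest element of `CS_g(C)`. -/
def csSet (P : Measure Ω) (C : Set (Ω → ℝ)) (g : Ω → ℝ) : Set (Ω → ℝ) :=
  ⋂ K ∈ CSclass P C g, K

/-- The solid hull of `K` in `L⁰₊`. -/
def SolidHull (P : Measure Ω) (K : Set (Ω → ℝ)) : Set (Ω → ℝ) :=
  {f | f ∈ L0plus P ∧ ∃ h ∈ K, f ≤ᵐ[P] h}

/-- `L∞`: essentially bounded (a.e.-measurable) random variables. -/
def Linf (P : Measure Ω) : Set (Ω → ℝ) :=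
  {f | AEMeasurable f P ∧ ∃ c : ℝ, ∀ᵐ ω ∂P, |f ω| ≤ c}

/-- `L∞₊ = L⁰₊ ∩ L∞`. -/
def LinfPlus (P : Measure Ω) : Set (Ω → ℝ) := L0plus P ∩ Linf P

/-- `L` is solid: `0 ≤ u ≤ h` a.s. with `h ∈ L` implies `u ∈ L`. -/
def IsSolid (P : Measure Ω) (L : Set (Ω → ℝ)) : Prop :=
  ∀ u : Ω → ℝ, AEMeasurable u P → 0 ≤ᵐ[P] u → (∃ h ∈ L, u ≤ᵐ[P] h) → u ∈ L

/-- `A_α := α (L − 1) = { α(f − 1) : f ∈ L }`. -/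
def Aset (L : Set (Ω → ℝ)) (α : ℝ) : Set (Ω → ℝ) :=
  (fun f : Ω → ℝ => fun ω => α * (f ω - 1)) '' L

/-- `J := ⋃_{α ≥ 0} A_α`. -/
def Jset (L : Set (Ω → ℝ)) : Set (Ω → ℝ) := ⋃ α ∈ Ici (0 : ℝ), Aset L α

/-- The weak* topology on (representatives of) `L∞`, viewed as the dual of `L¹(P)`:
the topology induced by the maps `φ ↦ ∫ φ·u dP` for integrable `u`. -/
def weakStarTop (P : Measure Ω) : TopologicalSpace (Ω → ℝ) :=
  ⨅ (u : Ω → ℝ) (_ : Integrable u P),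
    TopologicalSpace.induced (fun φ : Ω → ℝ => ∫ ω, φ ω * u ω ∂P) inferInstance


lemma uniform_abs_cont (P Q : Measure Ω) [IsFiniteMeasure P] [IsFiniteMeasure Q]
    (hPQ : P ≪ Q) {ε : ENNReal} (hε : ε ≠ 0) :
    ∃ δ : ENNReal, δ ≠ 0 ∧ ∀ A : Set Ω, Q A ≤ δ → P A ≤ ε := by
  rcases eq_or_ne ε ⊤ with rfl | hεtop
  · exact ⟨1, one_ne_zero, fun A _ => le_top⟩
  set d := P.rnDeriv Q with hd
  have hdm : Measurable d := Measure.measurable_rnDeriv P Q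
  have hPd : Q.withDensity d = P := Measure.withDensity_rnDeriv_eq P Q hPQ
  have htopQ : Q {ω | d ω = ⊤} = 0 := by
    have h1 : ∀ᵐ ω ∂Q, d ω < ⊤ := Measure.rnDeriv_lt_top P Q
    rw [measure_eq_zero_iff_ae_notMem]
    filter_upwards [h1] with ω hω
    exact hω.ne
  have htop : P {ω | d ω = ⊤} = 0 := hPQ htopQ
  have hiI : ⋂ n : ℕ, {ω | (n : ENNReal) < d ω} = {ω | d ω = ⊤} := by
    ext ω
    simp only [Set.mem_iInter, Set.mem_setOf_eq]
    constructor
    · intro h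
      by_contra hc
      obtain ⟨n, hn⟩ := ENNReal.exists_nat_gt hc
      exact absurd (h n) (not_lt.2 hn.le)
    · intro h n
      rw [h]; exact ENNReal.natCast_lt_top n
  have htend : Tendsto (fun n : ℕ => P {ω | (n : ENNReal) < d ω}) atTop (nhds 0) := by
    have := tendsto_measure_iInter_atTop (μ := P)
      (s := fun n : ℕ => {ω | (n : ENNReal) < d ω})
      (fun n => (measurableSet_lt measurable_const hdm).nullMeasurableSet)
      (fun n m hnm ω hω => lt_of_le_of_lt (by exact_mod_cast Nat.cast_le.2 hnm : (n:ENNReal) ≤ m) hω)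
      ⟨0, measure_ne_top _ _⟩
    rw [hiI, htop] at this
    exact this
  have hε2 : (0:ENNReal) < ε / 2 := ENNReal.div_pos hε (by norm_num)
  obtain ⟨n, hn⟩ : ∃ n : ℕ, P {ω | (n : ENNReal) < d ω} ≤ ε / 2 :=
    ((ENNReal.tendsto_nhds_zero.1 htend) (ε / 2) hε2).exists
  refine ⟨(ε / 2) / ((n : ENNReal) + 1), ?_, fun A hA => ?_⟩
  · refine ENNReal.div_ne_zero.2 ⟨ENNReal.div_ne_zero.2 ⟨hε, by norm_num⟩, ?_⟩
    exact (ENNReal.add_lt_top.2 ⟨ENNReal.natCast_lt_top n, ENNReal.one_lt_top⟩).ne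
  · set B := toMeasurable Q A with hB
    have hAB : A ⊆ B := subset_toMeasurable Q A
    have hBm : MeasurableSet B := measurableSet_toMeasurable Q A
    have hQB : Q B = Q A := measure_toMeasurable A
    have hsplit : B ⊆ (B ∩ {ω | d ω ≤ (n : ENNReal)}) ∪ (B ∩ {ω | (n : ENNReal) < d ω}) := by
      intro ω hω
      by_cases hc : d ω ≤ (n : ENNReal)
      · exact Or.inl ⟨hω, hc⟩
      · exact Or.inr ⟨hω, not_le.1 hc⟩
    have h1 : P (B ∩ {ω | d ω ≤ (n : ENNReal)}) ≤ ε / 2 := by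
      have hm1 : MeasurableSet (B ∩ {ω | d ω ≤ (n : ENNReal)}) :=
        hBm.inter (measurableSet_le hdm measurable_const)
      rw [← hPd, withDensity_apply _ hm1]
      calc (∫⁻ ω in B ∩ {ω | d ω ≤ (n : ENNReal)}, d ω ∂Q)
          ≤ ∫⁻ _ in B ∩ {ω | d ω ≤ (n : ENNReal)}, (n : ENNReal) ∂Q := by
            refine lintegral_mono_ae ?_
            filter_upwards [ae_restrict_mem hm1] with ω hω
            exact hω.2
        _ = (n : ENNReal) * Q (B ∩ {ω | d ω ≤ (n : ENNReal)}) := setLIntegral_const _ _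
        _ ≤ (n : ENNReal) * ((ε / 2) / ((n : ENNReal) + 1)) := by
            refine mul_le_mul_right ?_ _
            calc Q (B ∩ {ω | d ω ≤ (n : ENNReal)}) ≤ Q B := measure_mono inter_subset_left
              _ = Q A := hQB
              _ ≤ _ := hA
        _ ≤ ((n : ENNReal) + 1) * ((ε / 2) / ((n : ENNReal) + 1)) :=
            mul_le_mul_left (le_add_right le_rfl) _
        _ = ε / 2 := ENNReal.mul_div_cancel
            (by simp)
            (ENNReal.add_lt_top.2 ⟨ENNReal.natCast_lt_top n, ENNReal.one_lt_top⟩).ne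
    have h2 : P (B ∩ {ω | (n : ENNReal) < d ω}) ≤ ε / 2 :=
      le_trans (measure_mono inter_subset_right) hn
    calc P A ≤ P B := measure_mono hAB
      _ ≤ P (B ∩ {ω | d ω ≤ (n : ENNReal)}) + P (B ∩ {ω | (n : ENNReal) < d ω}) :=
          le_trans (measure_mono hsplit) (measure_union_le _ _)
      _ ≤ ε / 2 + ε / 2 := add_le_add h1 h2
      _ = ε := ENNReal.add_halves ε

lemma boundedInProb_mono (P : Measure Ω) {A B : Set (Ω → ℝ)} (hAB : A ⊆ B)
    (hB : BoundedInProb P B) : BoundedInProb P A := by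
  refine tendsto_of_tendsto_of_tendsto_of_le_of_le tendsto_const_nhds hB
    (fun ℓ => zero_le) (fun ℓ => ?_)
  exact biSup_mono fun f hf => hAB hf

/-- The witness set `K := { h ∈ L⁰₊ : P[h>0, g=0]=0 and E_Q[(h/g)·1_{g>0}] ≤ Q[g>0] }`. -/
def Kwitness (P Q : Measure Ω) (g : Ω → ℝ) : Set (Ω → ℝ) :=
  {h | h ∈ L0plus P ∧ P ({ω | 0 < h ω} ∩ {ω | g ω = 0}) = 0 ∧
    (∫⁻ ω in {ω | 0 < g ω}, ENNReal.ofReal (h ω / g ω) ∂Q) ≤ Q {ω | 0 < g ω}}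

/-- The set `C` of the example: outcomes `1 − θ₁ + (θ₁ + θ₂)ξ` for `θ` in the constraint
set `Θ = { θ ∈ ℝ₊² : θ₂ ≤ √θ₁ ≤ 1 }`. -/
def exampleC (ξ : Ω → ℝ) : Set (Ω → ℝ) :=
  {f | ∃ θ : ℝ × ℝ, (0 ≤ θ.1 ∧ 0 ≤ θ.2 ∧ θ.2 ≤ Real.sqrt θ.1 ∧ Real.sqrt θ.1 ≤ 1) ∧
    f = fun ω => 1 - θ.1 + (θ.1 + θ.2) * ξ ω}

/-- if `g ∈ C` is a numéraire of `C` witnessed by the equivalent probability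
`Q`, then `K := { h ∈ L⁰₊ : P[h>0,g=0]=0, E_Q[(h/g)1_{g>0}] ≤ Q[g>0] }` contains `C`, is
convex, closed in probability, satisfies (CS3), is bounded; hence `cs_g(C) ⊆ K` and
`cs_g(C)` is bounded. -/
theorem Kwitness_properties
    (P : Measure Ω) [IsProbabilityMeasure P]
    (C : Set (Ω → ℝ)) (hC : C ⊆ L0plus P) (hconv : Convex ℝ C)
    (g : Ω → ℝ) (hg : g ∈ C) (hsp : StrictlyPositiveOn P C g)
    (Q : Measure Ω) (hQ : EquivProb P Q)
    (hnum : ∀ f ∈ C,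
      (∫⁻ ω in {ω | 0 < g ω}, ENNReal.ofReal (f ω / g ω) ∂Q) ≤ Q {ω | 0 < g ω}) :
    C ⊆ Kwitness P Q g ∧ Convex ℝ (Kwitness P Q g) ∧ ClosedInProb P (Kwitness P Q g) ∧
    (∀ f ∈ Kwitness P Q g, ∀ δ : ℝ, 0 ≤ δ →
      (fun ω => (1 + δ) * f ω - δ * g ω) ∈ L0plus P →
      (fun ω => (1 + δ) * f ω - δ * g ω) ∈ Kwitness P Q g) ∧
    BoundedInProb P (Kwitness P Q g) ∧
    csSet P C g ⊆ Kwitness P Q g ∧ BoundedInProb P (csSet P C g) := by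
  obtain ⟨hQprob, hQP, hPQ⟩ := hQ
  haveI := hQprob
  obtain ⟨hgm, hg0⟩ := hC hg
  set g' := hgm.mk g with hg'def
  have hgm' : Measurable g' := hgm.measurable_mk
  have hgg' : g =ᵐ[P] g' := hgm.ae_eq_mk
  have hgg'Q : g =ᵐ[Q] g' := hgg'.filter_mono hQP.ae_le
  have hg0Q : 0 ≤ᵐ[Q] g := hg0.filter_mono hQP.ae_le
  set s := {ω | 0 < g' ω} with hs
  have hsmeas : MeasurableSet s := measurableSet_lt measurable_const hgm'
  have hsets : {ω | 0 < g ω} =ᵐ[Q] s := by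
    filter_upwards [hgg'Q] with ω hω
    change (0 < g ω) = (0 < g' ω)
    rw [hω]
  have hrestr : Q.restrict {ω | 0 < g ω} = Q.restrict s := Measure.restrict_congr_set hsets
  have hQseq : Q {ω | 0 < g ω} = Q s := measure_congr hsets
  have Ieq : ∀ h : Ω → ℝ, (∫⁻ ω in {ω | 0 < g ω}, ENNReal.ofReal (h ω / g ω) ∂Q)
      = ∫⁻ ω in s, ENNReal.ofReal (h ω / g' ω) ∂Q := by
    intro h
    rw [hrestr]
    refine lintegral_congr_ae ?_
    filter_upwards [ae_restrict_of_ae hgg'Q] with ω hω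
    rw [hω]
  have hmem : ∀ h : Ω → ℝ, h ∈ Kwitness P Q g ↔
      (h ∈ L0plus P ∧ P ({ω | 0 < h ω} ∩ {ω | g ω = 0}) = 0 ∧
        (∫⁻ ω in s, ENNReal.ofReal (h ω / g' ω) ∂Q) ≤ Q s) := by
    intro h
    unfold Kwitness
    rw [Set.mem_setOf_eq, Ieq h, hQseq]
  have haem : ∀ h : Ω → ℝ, AEMeasurable h P →
      AEMeasurable (fun ω => ENNReal.ofReal (h ω / g' ω)) (Q.restrict s) := fun h hh =>
    ENNReal.measurable_ofReal.comp_aemeasurable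
      (((hh.mono_ac hQP).restrict).div hgm'.aemeasurable.restrict)
  have hsae : ∀ᵐ ω ∂(Q.restrict s), 0 < g' ω := ae_restrict_mem hsmeas
  -- Part 1 : C ⊆ K
  have part1 : C ⊆ Kwitness P Q g := fun f hf => ⟨hC hf, hsp f hf, hnum f hf⟩
  -- Part 2 : convexity
  have part2 : Convex ℝ (Kwitness P Q g) := by
    intro x hx y hy a b ha hb hab
    rw [hmem] at hx hy
    obtain ⟨⟨hxm, hx0⟩, hxnull, hxint⟩ := hx
    obtain ⟨⟨hym, hy0⟩, hynull, hyint⟩ := hy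
    have hz : (a • x + b • y) = fun ω => a * x ω + b * y ω := rfl
    rw [hmem, hz]
    refine ⟨⟨(hxm.const_mul a).add (hym.const_mul b), ?_⟩, ?_, ?_⟩
    · filter_upwards [hx0, hy0] with ω h1 h2
      exact add_nonneg (mul_nonneg ha h1) (mul_nonneg hb h2)
    · refine measure_mono_null ?_ (measure_union_null hxnull hynull)
      rintro ω ⟨hpos, hgz⟩
      simp only [Set.mem_setOf_eq] at hpos
      have : 0 < a * x ω ∨ 0 < b * y ω := by
        by_contra hcon
        push_neg at hcon
        obtain ⟨h1, h2⟩ := hcon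
        linarith
      rcases this with h | h
      · have hx' : 0 < x ω := by
          by_contra hc
          exact absurd h (not_lt.2 (mul_nonpos_iff.2 (Or.inl ⟨ha, not_lt.1 hc⟩)))
        exact Or.inl ⟨hx', hgz⟩
      · have hy' : 0 < y ω := by
          by_contra hc
          exact absurd h (not_lt.2 (mul_nonpos_iff.2 (Or.inl ⟨hb, not_lt.1 hc⟩)))
        exact Or.inr ⟨hy', hgz⟩
    · have hx0Q : 0 ≤ᵐ[Q.restrict s] x := ae_restrict_of_ae (hx0.filter_mono hQP.ae_le)
      have hy0Q : 0 ≤ᵐ[Q.restrict s] y := ae_restrict_of_ae (hy0.filter_mono hQP.ae_le)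
      have key : (fun ω => ENNReal.ofReal ((a * x ω + b * y ω) / g' ω)) =ᵐ[Q.restrict s]
          fun ω => ENNReal.ofReal a * ENNReal.ofReal (x ω / g' ω)
            + ENNReal.ofReal b * ENNReal.ofReal (y ω / g' ω) := by
        filter_upwards [hsae, hx0Q, hy0Q] with ω hg hxω hyω
        rw [add_div, ← ENNReal.ofReal_mul ha, ← ENNReal.ofReal_mul hb,
          ← ENNReal.ofReal_add (mul_nonneg ha (div_nonneg hxω hg.le)) (mul_nonneg hb (div_nonneg hyω hg.le)), mul_div_assoc, mul_div_assoc]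
      calc (∫⁻ ω in s, ENNReal.ofReal ((a * x ω + b * y ω) / g' ω) ∂Q)
          = ∫⁻ ω in s, (ENNReal.ofReal a * ENNReal.ofReal (x ω / g' ω)
            + ENNReal.ofReal b * ENNReal.ofReal (y ω / g' ω)) ∂Q := lintegral_congr_ae key
        _ = ENNReal.ofReal a * (∫⁻ ω in s, ENNReal.ofReal (x ω / g' ω) ∂Q)
            + ENNReal.ofReal b * (∫⁻ ω in s, ENNReal.ofReal (y ω / g' ω) ∂Q) := by
            rw [lintegral_add_left' ((haem x hxm).const_mul _),
              lintegral_const_mul'' _ (haem x hxm), lintegral_const_mul'' _ (haem y hym)]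
        _ ≤ ENNReal.ofReal a * Q s + ENNReal.ofReal b * Q s :=
            add_le_add (mul_le_mul_right hxint _) (mul_le_mul_right hyint _)
        _ = Q s := by
            rw [← add_mul, ← ENNReal.ofReal_add ha hb, hab, ENNReal.ofReal_one, one_mul]
  -- Part 3 : closedness in probability
  have part3 : ClosedInProb P (Kwitness P Q g) := by
    intro f h hfK hhm hconv
    obtain ⟨ns, _, htend⟩ := hconv.exists_seq_tendsto_ae
    have hall : ∀ᵐ ω ∂P, ∀ n, 0 ≤ f n ω ∧ ¬(0 < f n ω ∧ g ω = 0) := by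
      rw [ae_all_iff]
      intro n
      have h1 := ((hmem _).1 (hfK n)).1.2
      have h2' : ∀ᵐ ω ∂P, ω ∉ ({ω | 0 < f n ω} ∩ {ω | g ω = 0}) :=
        measure_eq_zero_iff_ae_notMem.1 ((hmem _).1 (hfK n)).2.1
      filter_upwards [h1, h2'] with ω hω1 hω2
      exact ⟨hω1, fun hc => hω2 ⟨hc.1, hc.2⟩⟩
    refine (hmem h).2 ⟨⟨hhm, ?_⟩, ?_, ?_⟩
    · filter_upwards [hall, htend] with ω h1 h2
      exact ge_of_tendsto' h2 fun i => (h1 (ns i)).1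
    · rw [measure_eq_zero_iff_ae_notMem]
      filter_upwards [hall, htend] with ω h1 h2
      rintro ⟨hpos, hgz⟩
      have hle : ∀ i, f (ns i) ω ≤ 0 := fun i =>
        not_lt.1 fun hlt => (h1 (ns i)).2 ⟨hlt, hgz⟩
      exact absurd hpos (not_lt.2 (le_of_tendsto' h2 hle))
    · have htendQ : ∀ᵐ ω ∂(Q.restrict s), Tendsto (fun i => f (ns i) ω) atTop (nhds (h ω)) :=
        ae_restrict_of_ae (htend.filter_mono hQP.ae_le)
      have hconv2 : ∀ᵐ ω ∂(Q.restrict s),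
          Tendsto (fun i => ENNReal.ofReal (f (ns i) ω / g' ω)) atTop
            (nhds (ENNReal.ofReal (h ω / g' ω))) := by
        filter_upwards [htendQ] with ω hω
        exact (ENNReal.continuous_ofReal.tendsto _).comp (hω.div_const _)
      have hliminf : (fun ω => ENNReal.ofReal (h ω / g' ω)) =ᵐ[Q.restrict s]
          fun ω => liminf (fun i => ENNReal.ofReal (f (ns i) ω / g' ω)) atTop := by
        filter_upwards [hconv2] with ω hω
        exact hω.liminf_eq.symm
      calc (∫⁻ ω in s, ENNReal.ofReal (h ω / g' ω) ∂Q)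
          = ∫⁻ ω in s, liminf (fun i => ENNReal.ofReal (f (ns i) ω / g' ω)) atTop ∂Q :=
            lintegral_congr_ae hliminf
        _ ≤ liminf (fun i => ∫⁻ ω in s, ENNReal.ofReal (f (ns i) ω / g' ω) ∂Q) atTop :=
            lintegral_liminf_le' fun i => haem _ ((hmem _).1 (hfK (ns i))).1.1
        _ ≤ Q s := by
            have hb : ∀ i, (∫⁻ ω in s, ENNReal.ofReal (f (ns i) ω / g' ω) ∂Q) ≤ Q s :=
              fun i => ((hmem _).1 (hfK (ns i))).2.2
            exact (liminf_le_liminf (Filter.Eventually.of_forall hb)).trans_eq (liminf_const (Q s))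
  -- Part 4 : property (CS3)
  have part4 : ∀ f ∈ Kwitness P Q g, ∀ δ : ℝ, 0 ≤ δ →
      (fun ω => (1 + δ) * f ω - δ * g ω) ∈ L0plus P →
      (fun ω => (1 + δ) * f ω - δ * g ω) ∈ Kwitness P Q g := by
    intro f hf δ hδ hF
    rw [hmem] at hf
    obtain ⟨⟨hfm, hf0⟩, hfnull, hfint⟩ := hf
    rw [hmem]
    refine ⟨hF, ?_, ?_⟩
    · refine measure_mono_null ?_ hfnull
      rintro ω ⟨hpos, hgz⟩
      simp only [Set.mem_setOf_eq] at hpos hgz ⊢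
      refine ⟨?_, hgz⟩
      show 0 < f ω
      by_contra hc
      push_neg at hc
      have h1 : (1 + δ) * f ω ≤ 0 := mul_nonpos_iff.2 (Or.inl ⟨by linarith, hc⟩)
      rw [hgz] at hpos
      linarith
    · have hF0Q : 0 ≤ᵐ[Q.restrict s] fun ω => (1 + δ) * f ω - δ * g ω :=
        ae_restrict_of_ae (hF.2.filter_mono hQP.ae_le)
      have hgQ : g =ᵐ[Q.restrict s] g' := ae_restrict_of_ae hgg'Q
      have key : (fun ω => ENNReal.ofReal (((1 + δ) * f ω - δ * g ω) / g' ω) + ENNReal.ofReal δ)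
          =ᵐ[Q.restrict s] fun ω => ENNReal.ofReal (1 + δ) * ENNReal.ofReal (f ω / g' ω) := by
        filter_upwards [hsae, hF0Q, hgQ] with ω hg hFω hgeq
        have hgne : g' ω ≠ 0 := ne_of_gt hg
        have hdiv : (0:ℝ) ≤ ((1 + δ) * f ω - δ * g ω) / g' ω := div_nonneg hFω hg.le
        rw [← ENNReal.ofReal_add hdiv hδ, ← ENNReal.ofReal_mul (by linarith)]
        congr 1
        rw [hgeq]
        field_simp
        ring
      have hkey := lintegral_congr_ae key
      rw [lintegral_add_right _ measurable_const, lintegral_const_mul'' _ (haem f hfm),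
        lintegral_const, Measure.restrict_apply_univ] at hkey
      have hbound : (∫⁻ ω in s, ENNReal.ofReal (((1 + δ) * f ω - δ * g ω) / g' ω) ∂Q)
          + ENNReal.ofReal δ * Q s ≤ Q s + ENNReal.ofReal δ * Q s := by
        rw [hkey]
        calc ENNReal.ofReal (1 + δ) * (∫⁻ ω in s, ENNReal.ofReal (f ω / g' ω) ∂Q)
            ≤ ENNReal.ofReal (1 + δ) * Q s := mul_le_mul_right hfint _
          _ = Q s + ENNReal.ofReal δ * Q s := by
              rw [ENNReal.ofReal_add zero_le_one hδ, ENNReal.ofReal_one, add_mul, one_mul]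
      exact (ENNReal.add_le_add_iff_right
        (ENNReal.mul_ne_top ENNReal.ofReal_ne_top (measure_ne_top Q s))).1 hbound
  -- pointwise tail bound in Q
  have hpt : ∀ h ∈ Kwitness P Q g, ∀ ℓ : ℝ, 0 < ℓ →
      Q {ω | ℓ < h ω} ≤ Q {ω | Real.sqrt ℓ < g' ω} + ENNReal.ofReal (1 / Real.sqrt ℓ) := by
    intro h hh ℓ hℓ
    rw [hmem] at hh
    obtain ⟨⟨hhm, hh0⟩, hhnull, hhint⟩ := hh
    have hsq : 0 < Real.sqrt ℓ := Real.sqrt_pos.2 hℓ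
    have hincl : ∀ᵐ ω ∂Q, ω ∈ {ω | ℓ < h ω} →
        ω ∈ ({ω | Real.sqrt ℓ < g' ω}
          ∪ ({ω | ENNReal.ofReal (Real.sqrt ℓ) ≤ ENNReal.ofReal (h ω / g' ω)} ∩ s)) := by
      have hnull' : ∀ᵐ ω ∂Q, ω ∉ ({ω | 0 < h ω} ∩ {ω | g ω = 0}) :=
        (measure_eq_zero_iff_ae_notMem.1 hhnull).filter_mono hQP.ae_le
      filter_upwards [hnull', hg0Q, hgg'Q] with ω hn hg0ω hgeq hωmem
      have hhpos : 0 < h ω := lt_trans hℓ hωmem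
      have hgpos : 0 < g ω := lt_of_le_of_ne hg0ω fun hc => hn ⟨hhpos, hc.symm⟩
      have hg'pos : 0 < g' ω := hgeq ▸ hgpos
      by_cases hcase : Real.sqrt ℓ < g' ω
      · exact Or.inl hcase
      · refine Or.inr ⟨?_, hg'pos⟩
        push_neg at hcase
        refine ENNReal.ofReal_le_ofReal ?_
        rw [le_div_iff₀ hg'pos]
        calc Real.sqrt ℓ * g' ω ≤ Real.sqrt ℓ * Real.sqrt ℓ :=
            mul_le_mul_of_nonneg_left hcase hsq.le
          _ = ℓ := Real.mul_self_sqrt hℓ.le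
          _ ≤ h ω := hωmem.le
    have hmono : Q {ω | ℓ < h ω} ≤ Q ({ω | Real.sqrt ℓ < g' ω}
        ∪ ({ω | ENNReal.ofReal (Real.sqrt ℓ) ≤ ENNReal.ofReal (h ω / g' ω)} ∩ s)) := by
      refine measure_mono_ae ?_
      exact hincl
    have hmar : Q ({ω | ENNReal.ofReal (Real.sqrt ℓ) ≤ ENNReal.ofReal (h ω / g' ω)} ∩ s)
        ≤ ENNReal.ofReal (1 / Real.sqrt ℓ) := by
      rw [← Measure.restrict_apply' hsmeas]
      have hmar' := mul_meas_ge_le_lintegral₀ (μ := Q.restrict s) (haem h hhm)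
        (ENNReal.ofReal (Real.sqrt ℓ))
      have h1 : ENNReal.ofReal (Real.sqrt ℓ)
          * (Q.restrict s) {ω | ENNReal.ofReal (Real.sqrt ℓ) ≤ ENNReal.ofReal (h ω / g' ω)}
          ≤ 1 := le_trans hmar' (le_trans hhint prob_le_one)
      rw [one_div, ENNReal.ofReal_inv_of_pos hsq]
      rw [ENNReal.le_inv_iff_mul_le, mul_comm]
      exact h1
    calc Q {ω | ℓ < h ω} ≤ _ := hmono
      _ ≤ Q {ω | Real.sqrt ℓ < g' ω}
          + Q ({ω | ENNReal.ofReal (Real.sqrt ℓ) ≤ ENNReal.ofReal (h ω / g' ω)} ∩ s) :=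
          measure_union_le _ _
      _ ≤ Q {ω | Real.sqrt ℓ < g' ω} + ENNReal.ofReal (1 / Real.sqrt ℓ) :=
          add_le_add_right hmar _
  -- Part 5 : boundedness in probability
  have part5 : BoundedInProb P (Kwitness P Q g) := by
    unfold BoundedInProb
    rw [ENNReal.tendsto_nhds_zero]
    intro ε hε
    obtain ⟨δ, hδ0, hδ⟩ := uniform_abs_cont P Q hPQ hε.ne'
    have hb1 : Tendsto (fun ℓ : ℝ => Q {ω | Real.sqrt ℓ < g' ω}) atTop (nhds 0) := by
      rw [ENNReal.tendsto_nhds_zero]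
      intro η hη
      have hmeas2 : ∀ n : ℕ, NullMeasurableSet {ω | (n : ℝ) < g' ω} Q := fun n =>
        (measurableSet_lt measurable_const hgm').nullMeasurableSet
      have hanti : Antitone fun n : ℕ => {ω | (n : ℝ) < g' ω} := fun n m hnm ω hω =>
        lt_of_le_of_lt (by exact_mod_cast hnm : (n : ℝ) ≤ m) hω
      have hiI : ⋂ n : ℕ, {ω | (n : ℝ) < g' ω} = ∅ := by
        ext ω
        simp only [Set.mem_iInter, Set.mem_setOf_eq, Set.mem_empty_iff_false, iff_false,
          not_forall, not_lt]
        obtain ⟨n, hn⟩ := exists_nat_gt (g' ω)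
        exact ⟨n, hn.le⟩
      have htd := tendsto_measure_iInter_atTop (μ := Q) hmeas2 hanti ⟨0, measure_ne_top _ _⟩
      rw [hiI, measure_empty] at htd
      obtain ⟨n, hn⟩ := (ENNReal.tendsto_nhds_zero.1 htd η hη).exists
      filter_upwards [eventually_ge_atTop ((n : ℝ) ^ 2)] with ℓ hℓ
      refine le_trans (measure_mono ?_) hn
      intro ω hω
      exact lt_of_le_of_lt (Real.le_sqrt_of_sq_le hℓ) hω
    have hsqrt : Tendsto Real.sqrt atTop atTop :=
      tendsto_atTop_atTop.2 fun b => ⟨b ^ 2, fun x hx => Real.le_sqrt_of_sq_le hx⟩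
    have hb2 : Tendsto (fun ℓ : ℝ => ENNReal.ofReal (1 / Real.sqrt ℓ)) atTop (nhds 0) := by
      have h0 : Tendsto (fun ℓ : ℝ => 1 / Real.sqrt ℓ) atTop (nhds 0) := by
        simp only [one_div]
        exact tendsto_inv_atTop_zero.comp hsqrt
      have := ENNReal.tendsto_ofReal h0
      rwa [ENNReal.ofReal_zero] at this
    have hsum : Tendsto (fun ℓ : ℝ => Q {ω | Real.sqrt ℓ < g' ω}
        + ENNReal.ofReal (1 / Real.sqrt ℓ)) atTop (nhds 0) := by
      have := hb1.add hb2
      rwa [add_zero] at this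
    have hev := (ENNReal.tendsto_nhds_zero.1 hsum) δ (pos_iff_ne_zero.2 hδ0)
    filter_upwards [hev, eventually_gt_atTop (0 : ℝ)] with ℓ hℓ hℓpos
    refine iSup_le fun h => iSup_le fun hh => ?_
    exact hδ _ (le_trans (hpt h hh ℓ hℓpos) hℓ)
  -- Parts 6 and 7
  have hKcs : Kwitness P Q g ∈ CSclass P C g :=
    ⟨fun h hh => hh.1, part1, part2, part3, part4⟩
  have part6 : csSet P C g ⊆ Kwitness P Q g := Set.biInter_subset_of_mem hKcs
  exact ⟨part1, part2, part3, part4, part5, part6, boundedInProb_mono P part6 part5⟩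


end
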